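/- Elasticity/symmetry property of blocking probabilities: in the multi-rate Erlang loss system, the partial derivative of the blocking probability of class j_1 with respect to the offered load of class j_2 equals the partial derivative of the blocking probability of class j_2 with respect to the offered load of class j_1: ∂β_{j_1}/∂q_{j_2} = ∂β_{j_2}/∂q_{j_1}. -/

import Mathlib

/-- Normalizing function `H(c, J) = ∑_{Q : ∑_k b_k Q_k ≤ c} ∏_k q_k^{Q_k}/Q_k!`,
as a function of the vector of offered loads `q`. -/
noncomputable def Hfun (J : ℕ) (b : Fin J → ℕ) (c : ℕ) (q : Fin J → ℝ) : ℝ :=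
  ∑ Q : Fin J → Fin (c + 1),
    if ∑ k, b k * (Q k : ℕ) ≤ c then ∏ k, q k ^ ((Q k : ℕ)) / (Nat.factorial (Q k) : ℝ)
    else 0

/-- Blocking probability of class `j` as a function of the offered loads. -/
noncomputable def lolp (J : ℕ) (b : Fin J → ℕ) (C : ℕ) (j : Fin J) (q : Fin J → ℝ) : ℝ :=
  1 - Hfun J b (C - b j) q / Hfun J b C q

open Finset

namespace LolpAux

variable {J : ℕ}

/-- Index set: functions `Fin J → ℕ` bounded by `m`. -/
def Pset (J m : ℕ) : Finset (Fin J → ℕ) :=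
  Fintype.piFinset (fun _ => Finset.range (m + 1))

/-- Generalized normalizing sum, with an offset `a` in the capacity constraint. -/
noncomputable def W (b : Fin J → ℕ) (a c m : ℕ) (q : Fin J → ℝ) : ℝ :=
  ∑ Q ∈ Pset J m,
    if a + ∑ k, b k * Q k ≤ c then ∏ k, q k ^ Q k / (Nat.factorial (Q k) : ℝ) else 0

lemma Hfun_eq_W (b : Fin J → ℕ) (c : ℕ) (q : Fin J → ℝ) :
    Hfun J b c q = W b 0 c c q := by
  unfold Hfun W Pset
  refine Finset.sum_nbij' (fun Q k => (Q k : ℕ))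
    (fun Q k => (⟨min (Q k) c, by omega⟩ : Fin (c + 1))) ?_ ?_ ?_ ?_ ?_
  · intro Q _
    simp [Fintype.mem_piFinset, Nat.lt_succ_iff, Fin.is_le]
  · intro Q _; exact mem_univ _
  · intro Q _
    funext k
    ext
    simp [Nat.min_eq_left (Fin.is_le (Q k))]
  · intro Q hQ
    simp only [Fintype.mem_piFinset, Finset.mem_range, Nat.lt_succ_iff] at hQ
    funext k
    simp [Nat.min_eq_left (hQ k)]
  · intro Q _
    simp

lemma cond_W (b : Fin J → ℕ) (a₁ c₁ a₂ c₂ m : ℕ) (q : Fin J → ℝ)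
    (h : ∀ n : ℕ, a₁ + n ≤ c₁ ↔ a₂ + n ≤ c₂) :
    W b a₁ c₁ m q = W b a₂ c₂ m q := by
  unfold W
  exact Finset.sum_congr rfl fun Q _ => if_congr (h _) rfl rfl

lemma indep_W (b : Fin J → ℕ) (hb : ∀ k, 0 < b k) (a c m : ℕ) (h : c - a ≤ m)
    (q : Fin J → ℝ) : W b a c m q = W b a c (c - a) q := by
  unfold W
  refine (Finset.sum_subset
    (Fintype.piFinset_subset _ _ fun k => Finset.range_subset_range.mpr (by omega)) ?_).symm
  intro Q hQm hQ
  simp only [Pset, Fintype.mem_piFinset, Finset.mem_range, Nat.lt_succ_iff, not_forall] at hQ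
  obtain ⟨k, hk⟩ := hQ
  have h1 : b k * Q k ≤ ∑ i, b i * Q i :=
    Finset.single_le_sum (f := fun i => b i * Q i) (fun i _ => Nat.zero_le _) (mem_univ k)
  have h2 : Q k ≤ b k * Q k := Nat.le_mul_of_pos_left _ (hb k)
  rw [if_neg (by omega)]

lemma W_pos (b : Fin J → ℕ) (c : ℕ) (q : Fin J → ℝ) (hq : ∀ k, 0 < q k) :
    0 < W b 0 c c q := by
  have h0 : (fun _ => 0 : Fin J → ℕ) ∈ Pset J c := by
    simp [Pset, Fintype.mem_piFinset]
  have hle : (1 : ℝ) ≤ W b 0 c c q := by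
    unfold W
    have h := Finset.single_le_sum
      (f := fun Q : Fin J → ℕ => if 0 + ∑ k, b k * Q k ≤ c then
        ∏ k, q k ^ Q k / (Nat.factorial (Q k) : ℝ) else 0)
      (fun Q _ => by
        beta_reduce
        split
        · exact Finset.prod_nonneg fun k _ =>
            div_nonneg (pow_nonneg (hq k).le _) (by positivity)
        · exact le_rfl) h0
    simpa using h
  linarith

lemma sum_update_mul (b : Fin J → ℕ) (Q : Fin J → ℕ) (j : Fin J) (m : ℕ) :
    ∑ k, b k * (Function.update Q j m) k = b j * m + ∑ k ∈ univ.erase j, b k * Q k := by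
  rw [← Finset.add_sum_erase univ (fun k => b k * (Function.update Q j m) k) (mem_univ j)]
  simp only [Function.update_self]
  congr 1
  exact Finset.sum_congr rfl fun k hk => by
    rw [Function.update_of_ne (mem_erase.mp hk).1]

lemma sum_split (b : Fin J → ℕ) (Q : Fin J → ℕ) (j : Fin J) :
    ∑ k, b k * Q k = b j * Q j + ∑ k ∈ univ.erase j, b k * Q k := by
  rw [← Finset.add_sum_erase univ (fun k => b k * Q k) (mem_univ j)]

lemma prod_update_pow (q : Fin J → ℝ) (Q : Fin J → ℕ) (j : Fin J) (t : ℝ) :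
    ∏ k, (Function.update q j t) k ^ Q k / (Nat.factorial (Q k) : ℝ)
      = t ^ Q j / (Nat.factorial (Q j) : ℝ)
        * ∏ k ∈ univ.erase j, q k ^ Q k / (Nat.factorial (Q k) : ℝ) := by
  rw [← Finset.mul_prod_erase univ
    (fun k => (Function.update q j t) k ^ Q k / (Nat.factorial (Q k) : ℝ)) (mem_univ j)]
  simp only [Function.update_self]
  congr 1
  exact Finset.prod_congr rfl fun k hk => by
    rw [Function.update_of_ne (mem_erase.mp hk).1]

lemma shift_sum (b : Fin J → ℕ) (hb : ∀ k, 0 < b k) (c : ℕ) (j : Fin J)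
    (q : Fin J → ℝ) (t₀ : ℝ) :
    (∑ Q ∈ Pset J c, if 0 + ∑ k, b k * Q k ≤ c then
        (Q j : ℝ) * t₀ ^ (Q j - 1) / (Nat.factorial (Q j) : ℝ)
          * ∏ k ∈ univ.erase j, q k ^ Q k / (Nat.factorial (Q k) : ℝ)
      else 0)
      = W b (b j) c c (Function.update q j t₀) := by
  unfold W
  rw [← Finset.sum_filter_of_ne (s := Pset J c) (p := fun Q => Q j ≠ 0)
      (f := fun Q => if 0 + ∑ k, b k * Q k ≤ c then
        (Q j : ℝ) * t₀ ^ (Q j - 1) / (Nat.factorial (Q j) : ℝ)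
          * ∏ k ∈ univ.erase j, q k ^ Q k / (Nat.factorial (Q k) : ℝ) else 0)
      (fun Q _ hne => by
        intro h0
        apply hne
        simp [h0])]
  rw [← Finset.sum_filter_of_ne (s := Pset J c) (p := fun Q => Q j ≠ c)
      (f := fun Q => if b j + ∑ k, b k * Q k ≤ c then
        ∏ k, (Function.update q j t₀) k ^ Q k / (Nat.factorial (Q k) : ℝ) else 0)
      (fun Q _ hne => by
        intro h0
        apply hne
        have h1 : b j * Q j ≤ ∑ i, b i * Q i :=
          Finset.single_le_sum (f := fun i => b i * Q i) (fun i _ => Nat.zero_le _) (mem_univ j)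
        have h2 : Q j ≤ b j * Q j := Nat.le_mul_of_pos_left _ (hb j)
        have hfalse : ¬ (b j + ∑ k, b k * Q k ≤ c) := by
          have := hb j; omega
        simp only [hfalse, if_false])]
  refine Finset.sum_nbij' (fun Q => Function.update Q j (Q j - 1))
    (fun Q => Function.update Q j (Q j + 1)) ?_ ?_ ?_ ?_ ?_
  · intro Q hQ
    simp only [Finset.mem_filter, Pset, Fintype.mem_piFinset, Finset.mem_range,
      Nat.lt_succ_iff] at hQ ⊢
    obtain ⟨hQ1, hQ2⟩ := hQ
    constructor
    · intro k
      by_cases hk : k = j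
      · subst hk; simp only [Function.update_self]; have := hQ1 k; omega
      · rw [Function.update_of_ne hk]; exact hQ1 k
    · simp only [Function.update_self]
      have := hQ1 j; omega
  · intro Q hQ
    simp only [Finset.mem_filter, Pset, Fintype.mem_piFinset, Finset.mem_range,
      Nat.lt_succ_iff] at hQ ⊢
    obtain ⟨hQ1, hQ2⟩ := hQ
    constructor
    · intro k
      by_cases hk : k = j
      · subst hk; simp only [Function.update_self]; have := hQ1 k; omega
      · rw [Function.update_of_ne hk]; exact hQ1 k
    · simp only [Function.update_self]; omega
  · intro Q hQ
    simp only [Finset.mem_filter] at hQ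
    funext k
    by_cases hk : k = j
    · subst hk
      simp only [Function.update_self]
      have := hQ.2
      omega
    · simp [Function.update_of_ne hk]
  · intro Q hQ
    simp only [Finset.mem_filter] at hQ
    funext k
    by_cases hk : k = j
    · subst hk
      simp only [Function.update_self]
      omega
    · simp [Function.update_of_ne hk]
  · intro Q hQ
    simp only [Finset.mem_filter, Pset, Fintype.mem_piFinset, Finset.mem_range,
      Nat.lt_succ_iff] at hQ
    obtain ⟨hQ1, hQ0⟩ := hQ
    beta_reduce
    -- conditions agree
    have hcond : (0 + ∑ k, b k * Q k ≤ c)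
        ↔ (b j + ∑ k, b k * (Function.update Q j (Q j - 1)) k ≤ c) := by
      rw [sum_update_mul, sum_split b Q j]
      have hQj : 1 ≤ Q j := Nat.one_le_iff_ne_zero.mpr hQ0
      have : b j * Q j = b j * (Q j - 1) + b j := by
        obtain ⟨m, hm⟩ := Nat.exists_eq_succ_of_ne_zero hQ0
        rw [hm]
        simp [Nat.mul_succ]
      omega
    rw [prod_update_pow]
    have hval : (Q j : ℝ) * t₀ ^ (Q j - 1) / (Nat.factorial (Q j) : ℝ)
        = t₀ ^ (Q j - 1) / (Nat.factorial (Q j - 1) : ℝ) := by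
      obtain ⟨m, hm⟩ := Nat.exists_eq_succ_of_ne_zero hQ0
      rw [hm]
      simp only [Nat.add_sub_cancel, Nat.factorial_succ]
      push_cast
      rw [div_eq_div_iff (by positivity) (by positivity)]
      ring
    have hprodupd : ∏ k ∈ univ.erase j,
        q k ^ (Function.update Q j (Q j - 1)) k / (Nat.factorial ((Function.update Q j (Q j - 1)) k) : ℝ)
        = ∏ k ∈ univ.erase j, q k ^ Q k / (Nat.factorial (Q k) : ℝ) :=
      Finset.prod_congr rfl fun k hk => by
        rw [Function.update_of_ne (mem_erase.mp hk).1]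
    rw [Function.update_self, hprodupd, hval]
    by_cases h : 0 + ∑ k, b k * Q k ≤ c
    · rw [if_pos h, if_pos (hcond.mp h)]
    · rw [if_neg h, if_neg (fun hc => h (hcond.mpr hc))]

lemma hasDerivAt_W (b : Fin J → ℕ) (hb : ∀ k, 0 < b k) (c : ℕ) (j : Fin J)
    (q : Fin J → ℝ) (t₀ : ℝ) :
    HasDerivAt (fun t => W b 0 c c (Function.update q j t))
      (W b (b j) c c (Function.update q j t₀)) t₀ := by
  rw [← shift_sum b hb c j q t₀]
  unfold W
  apply HasDerivAt.fun_sum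
  intro Q _
  by_cases hc : 0 + ∑ k, b k * Q k ≤ c
  · simp only [hc, if_true]
    have hfun : (fun t => ∏ k, (Function.update q j t) k ^ Q k / (Nat.factorial (Q k) : ℝ))
        = fun t => t ^ Q j / (Nat.factorial (Q j) : ℝ)
          * ∏ k ∈ univ.erase j, q k ^ Q k / (Nat.factorial (Q k) : ℝ) :=
      funext fun t => prod_update_pow q Q j t
    rw [hfun]
    exact ((hasDerivAt_pow (Q j) t₀).div_const ((Nat.factorial (Q j) : ℝ))).mul_const
      (∏ k ∈ univ.erase j, q k ^ Q k / (Nat.factorial (Q k) : ℝ))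
  · simp only [hc, if_false]
    exact hasDerivAt_const _ _

end LolpAux

open LolpAux in
theorem lolp_derivative_symmetry (J : ℕ) (b : Fin J → ℕ) (C : ℕ)
    (hb : ∀ j, 0 < b j) (hbC : ∀ j, b j ≤ C)
    (q : Fin J → ℝ) (hq : ∀ j, 0 < q j) (j₁ j₂ : Fin J) :
    deriv (fun t => lolp J b C j₁ (Function.update q j₂ t)) (q j₂)
      = deriv (fun t => lolp J b C j₂ (Function.update q j₁ t)) (q j₁) := by
  have key : ∀ ja jb : Fin J,
      deriv (fun t => lolp J b C ja (Function.update q jb t)) (q jb)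
        = -((W b (b ja + b jb) C (C - (b ja + b jb)) q * W b 0 C C q
            - W b 0 (C - b ja) (C - b ja) q * W b 0 (C - b jb) (C - b jb) q)
          / (W b 0 C C q) ^ 2) := by
    intro ja jb
    have hupd : Function.update q jb (q jb) = q := Function.update_eq_self jb q
    have hnum := hasDerivAt_W b hb (C - b ja) jb q (q jb)
    have hden := hasDerivAt_W b hb C jb q (q jb)
    rw [hupd] at hnum hden
    have hd0 : W b 0 C C q ≠ 0 := ne_of_gt (W_pos b C q hq)
    have hd0' : W b 0 C C (Function.update q jb (q jb)) ≠ 0 := by rwa [hupd]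
    have hdiv := (hnum.fun_div hden (by rwa [hupd])).const_sub 1
    have hfun : (fun t => lolp J b C ja (Function.update q jb t))
        = fun t => 1 - W b 0 (C - b ja) (C - b ja) (Function.update q jb t)
            / W b 0 C C (Function.update q jb t) := by
      funext t
      rw [lolp, Hfun_eq_W, Hfun_eq_W]
    rw [hfun, hdiv.deriv, hupd]
    -- now rewrite the derivative pieces into canonical form
    have ha : W b (b jb) (C - b ja) (C - b ja) q
        = W b (b ja + b jb) C (C - (b ja + b jb)) q := by
      rw [cond_W b (b jb) (C - b ja) (b ja + b jb) C (C - b ja) q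
        (fun n => by have := hbC ja; omega)]
      rw [indep_W b hb (b ja + b jb) C (C - b ja) (by omega) q]
    have hbjb : W b (b jb) C C q = W b 0 (C - b jb) (C - b jb) q := by
      rw [cond_W b (b jb) C 0 (C - b jb) C q (fun n => by have := hbC jb; omega)]
      rw [indep_W b hb 0 (C - b jb) C (by omega) q]
      simp
    rw [ha, hbjb]
  rw [key j₁ j₂, key j₂ j₁, add_comm (b j₁) (b j₂),
    mul_comm (W b 0 (C - b j₁) (C - b j₁) q) (W b 0 (C - b j₂) (C - b j₂) q)]
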